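/- Let R be a ring with unity such that the group of units U(R) contains an ω-subgroup. Then every nilpotent element of ∇(R) commutes with every element of ∇(R), where ∇(R) = {a ∈ R : the centralizer C_{U(R)}(a) has finite index in U(R)} is the FC-subring of R. -/

import Mathlib

/-- The centralizer of a ring element `a` inside the unit group `Rˣ`. -/
def unitCentralizer {R : Type*} [Ring R] (a : R) : Subgroup Rˣ where
  carrier := {u : Rˣ | (u : R) * a = a * (u : R)}
  one_mem' := by simp
  mul_mem' := by
    intro u v hu hv
    have hu' : Commute ((u : Rˣ) : R) a := hu
    have hv' : Commute ((v : Rˣ) : R) a := hv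
    show ((u * v : Rˣ) : R) * a = a * ((u * v : Rˣ) : R)
    rw [Units.val_mul]
    exact hu'.mul_left hv'
  inv_mem' := by
    intro u hu
    have hu' : Commute ((u : Rˣ) : R) a := hu
    exact hu'.units_inv_left

@[simp] lemma mem_unitCentralizer {R : Type*} [Ring R] {a : R} {u : Rˣ} :
    u ∈ unitCentralizer a ↔ (u : R) * a = a * (u : R) := Iff.rfl

/-- The FC-subring `∇(R)` of a ring `R`: the set of elements whose centralizer
in the unit group has finite index. -/
def FCSubring (R : Type*) [Ring R] : Set R :=
  {a : R | (unitCentralizer a).FiniteIndex}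

/-- An infinite subgroup `H ≤ Rˣ` is an ω-subgroup if for every nonzero Lie
commutator `x*y - y*x` only finitely many elements of the form `1 - h`, `h ∈ H`,
annihilate it on the left. -/
def IsOmegaSubgroup {R : Type*} [Ring R] (H : Subgroup Rˣ) : Prop :=
  (H : Set Rˣ).Infinite ∧
    ∀ x y : R, x * y - y * x ≠ 0 →
      {h : Rˣ | h ∈ H ∧ (1 - (h : R)) * (x * y - y * x) = 0}.Finite

/-- The FC-radical `ΔU(R)` of the unit group: the subgroup of units having only
finitely many conjugates, i.e. whose centralizer has finite index. -/
def FCRadical (R : Type*) [Ring R] : Subgroup Rˣ where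
  carrier := {u : Rˣ | (unitCentralizer (u : R)).FiniteIndex}
  one_mem' := by
    have h : unitCentralizer ((1 : Rˣ) : R) = ⊤ := by
      ext u; simp
    show (unitCentralizer ((1 : Rˣ) : R)).FiniteIndex
    rw [h]
    infer_instance
  mul_mem' := by
    intro u v hu hv
    have hle : unitCentralizer (u : R) ⊓ unitCentralizer (v : R) ≤
        unitCentralizer ((u * v : Rˣ) : R) := by
      intro w hw
      have hwu : (w : R) * (u : R) = (u : R) * (w : R) := hw.1
      have hwv : (w : R) * (v : R) = (v : R) * (w : R) := hw.2
      show (w : R) * ((u * v : Rˣ) : R) = ((u * v : Rˣ) : R) * (w : R)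
      rw [Units.val_mul, ← mul_assoc, hwu, mul_assoc, hwv, ← mul_assoc]
    haveI : (unitCentralizer (u : R)).FiniteIndex := hu
    haveI : (unitCentralizer (v : R)).FiniteIndex := hv
    exact Subgroup.finiteIndex_of_le hle
  inv_mem' := by
    intro u hu
    have h : unitCentralizer ((u⁻¹ : Rˣ) : R) = unitCentralizer (u : R) := by
      ext w
      constructor
      · intro hw
        have hw' : Commute ((w : Rˣ) : R) ((u⁻¹ : Rˣ) : R) := hw
        have h2 : Commute ((w : Rˣ) : R) ((u⁻¹⁻¹ : Rˣ) : R) := hw'.units_inv_right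
        rw [inv_inv] at h2
        exact h2
      · intro hw
        have hw' : Commute ((w : Rˣ) : R) ((u : Rˣ) : R) := hw
        exact hw'.units_inv_right
    show (unitCentralizer ((u⁻¹ : Rˣ) : R)).FiniteIndex
    rw [h]
    exact hu

@[simp] lemma mem_FCRadical {R : Type*} [Ring R] {u : Rˣ} :
    u ∈ FCRadical R ↔ (unitCentralizer (u : R)).FiniteIndex := Iff.rfl

lemma aux_infinite_inter {G : Type*} [Group G] (H K : Subgroup G)
    (hHinf : (H : Set G).Infinite) (hK : K.FiniteIndex) :
    {g : G | g ∈ H ∧ g ∈ K}.Infinite := by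
  classical
  haveI := hK
  haveI : Finite (G ⧸ K) := Subgroup.finite_quotient_of_finiteIndex
  haveI : Infinite ↥(H : Set G) := hHinf.to_subtype
  set f : ↥(H : Set G) → G ⧸ K := fun h => (QuotientGroup.mk h.1 : G ⧸ K) with hfdef
  obtain ⟨q, hq⟩ := Finite.exists_infinite_fiber f
  haveI : Infinite ↥(f ⁻¹' {q}) := hq
  obtain ⟨h₀⟩ : Nonempty ↥(f ⁻¹' {q}) := inferInstance
  refine Set.infinite_of_injective_forall_mem
    (f := fun h : ↥(f ⁻¹' {q}) => (h₀.1.1 : G)⁻¹ * h.1.1) ?_ ?_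
  · intro a b hab
    have : (a.1.1 : G) = b.1.1 := mul_left_cancel hab
    exact Subtype.ext (Subtype.ext this)
  · intro a
    have ha : f a.1 = q := Set.mem_singleton_iff.mp a.2
    have h0 : f h₀.1 = q := Set.mem_singleton_iff.mp h₀.2
    have hcos : (h₀.1.1 : G)⁻¹ * a.1.1 ∈ K := QuotientGroup.eq.mp (h0.trans ha.symm)
    exact ⟨H.mul_mem (H.inv_mem h₀.1.2) a.1.2, hcos⟩

/-- If `U(R)` contains an ω-subgroup, then every nilpotent element of the
FC-subring `∇(R)` commutes with every element of `∇(R)`. -/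
theorem nilpotent_central_in_fcSubring (R : Type*) [Ring R]
    (H : Subgroup Rˣ) (hH : IsOmegaSubgroup H) :
    ∀ x ∈ FCSubring R, IsNilpotent x → ∀ v ∈ FCSubring R, x * v = v * x := by
  classical
  intro x hx hnil v hv
  by_contra hne
  have hc0 : x * v - v * x ≠ 0 := sub_ne_zero.mpr hne
  haveI hxF : (unitCentralizer x).FiniteIndex := hx
  haveI hvF : (unitCentralizer v).FiniteIndex := hv
  haveI hKF : (unitCentralizer x ⊓ unitCentralizer v).FiniteIndex := inferInstance
  have hA : {g : Rˣ | g ∈ H ∧ g ∈ unitCentralizer x ⊓ unitCentralizer v}.Infinite :=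
    aux_infinite_inter H _ hH.1 hKF
  set A : Set Rˣ := {g : Rˣ | g ∈ H ∧ g ∈ unitCentralizer x ⊓ unitCentralizer v} with hAdef
  have hAx : ∀ g ∈ A, (g : R) * x = x * (g : R) :=
    fun g hg => (Subgroup.mem_inf.mp hg.2).1
  have hAv : ∀ g ∈ A, (g : R) * v = v * (g : R) :=
    fun g hg => (Subgroup.mem_inf.mp hg.2).2
  -- units 1 + x*(1-g) for g ∈ A
  have hunit : ∀ g ∈ A, IsUnit (1 + x * (1 - (g : R))) := by
    intro g hg
    have hcg : Commute x (g : R) := (hAx g hg).symm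
    have hcomm : Commute x (1 - (g : R)) := (Commute.one_right x).sub_right hcg
    exact (hcomm.isNilpotent_mul_right hnil).isUnit_one_add
  set U : Rˣ → Rˣ := fun g => if hg : g ∈ A then (hunit g hg).unit else 1 with hUdef
  have hUval : ∀ g (hg : g ∈ A), ((U g : Rˣ) : R) = 1 + x * (1 - (g : R)) := by
    intro g hg
    simp only [hUdef, dif_pos hg]
    exact (hunit g hg).unit_spec
  haveI : Finite (Rˣ ⧸ unitCentralizer v) :=
    Subgroup.finite_quotient_of_finiteIndex
  haveI : Infinite ↥A := hA.to_subtype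
  set f : ↥A → Rˣ ⧸ unitCentralizer v :=
    fun h => (QuotientGroup.mk (U h.1)⁻¹ : Rˣ ⧸ unitCentralizer v) with hfdef
  obtain ⟨q, hq⟩ := Finite.exists_infinite_fiber f
  haveI : Infinite ↥(f ⁻¹' {q}) := hq
  obtain ⟨h₀⟩ : Nonempty ↥(f ⁻¹' {q}) := inferInstance
  set g₀ : Rˣ := h₀.1.1 with hg₀def
  have hg₀A : g₀ ∈ A := h₀.1.2
  set u₀ : Rˣ := U g₀ with hu₀def
  have hu₀val : ((u₀ : Rˣ) : R) = 1 + x * (1 - (g₀ : R)) := hUval g₀ hg₀A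
  have hgx0 : (g₀ : R) * x = x * (g₀ : R) := hAx g₀ hg₀A
  have hgv0 : (g₀ : R) * v = v * (g₀ : R) := hAv g₀ hg₀A
  have hu₀x : Commute ((u₀ : Rˣ) : R) x := by
    rw [hu₀val]
    exact (Commute.one_left x).add_left
      ((Commute.refl x).mul_left ((Commute.one_left x).sub_left hgx0))
  have hux : ((u₀ : Rˣ) : R) * x = x * ((u₀ : Rˣ) : R) := hu₀x.eq
  set w : R := ((u₀⁻¹ : Rˣ) : R) with hwdef
  have huw : ((u₀ : Rˣ) : R) * w = 1 := by rw [hwdef]; exact u₀.mul_inv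
  have hwu : w * ((u₀ : Rˣ) : R) = 1 := by rw [hwdef]; exact u₀.inv_mul
  set y : R := w * v with hydef
  set d : R := x * y - y * x with hddef
  have hu₀d : ((u₀ : Rˣ) : R) * d = x * v - v * x := by
    have h1 : ((u₀ : Rˣ) : R) * (x * y) = x * v := by
      rw [hydef]
      calc ((u₀ : Rˣ) : R) * (x * (w * v))
          = (((u₀ : Rˣ) : R) * x) * (w * v) := by noncomm_ring
        _ = (x * ((u₀ : Rˣ) : R)) * (w * v) := by rw [hux]
        _ = x * ((((u₀ : Rˣ) : R) * w) * v) := by noncomm_ring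
        _ = x * v := by rw [huw, one_mul]
    have h2 : ((u₀ : Rˣ) : R) * (y * x) = v * x := by
      rw [hydef]
      calc ((u₀ : Rˣ) : R) * (w * v * x)
          = (((u₀ : Rˣ) : R) * w) * (v * x) := by noncomm_ring
        _ = v * x := by rw [huw, one_mul]
    rw [hddef, mul_sub, h1, h2]
  have hdne : d ≠ 0 := by
    intro h0
    apply hc0
    rw [← hu₀d, h0, mul_zero]
  -- the element z and the identity u₀ * m = u₀ * d, giving m = d
  set z : R := w * v * ((u₀ : Rˣ) : R) with hzdef
  set m : R := x * z - v * x with hmdef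
  have hm_eq_d : m = d := by
    have hgvx : (g₀ : R) * (v * x) = (v * x) * (g₀ : R) := by
      rw [← mul_assoc, hgv0, mul_assoc, hgx0, ← mul_assoc]
    have hswap2 : v * (x * (1 - (g₀ : R))) = (1 - (g₀ : R)) * (v * x) := by
      have h1 : (1 - (g₀ : R)) * (v * x) = (v * x) * (1 - (g₀ : R)) := by
        rw [sub_mul, mul_sub, one_mul, mul_one, hgvx]
      rw [h1]
      exact (mul_assoc v x _).symm
    have hu₀m : ((u₀ : Rˣ) : R) * m = x * v - v * x := by
      rw [hmdef, hzdef]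
      calc ((u₀ : Rˣ) : R) * (x * (w * v * ((u₀ : Rˣ) : R)) - v * x)
          = (((u₀ : Rˣ) : R) * x) * (w * v * ((u₀ : Rˣ) : R))
              - ((u₀ : Rˣ) : R) * (v * x) := by noncomm_ring
        _ = (x * ((u₀ : Rˣ) : R)) * (w * v * ((u₀ : Rˣ) : R))
              - ((u₀ : Rˣ) : R) * (v * x) := by rw [hux]
        _ = x * ((((u₀ : Rˣ) : R) * w) * (v * ((u₀ : Rˣ) : R)))
              - ((u₀ : Rˣ) : R) * (v * x) := by noncomm_ring
        _ = x * (v * ((u₀ : Rˣ) : R)) - ((u₀ : Rˣ) : R) * (v * x) := by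
              rw [huw, one_mul]
        _ = x * (v * (1 + x * (1 - (g₀ : R))))
              - (1 + x * (1 - (g₀ : R))) * (v * x) := by rw [hu₀val]
        _ = x * v - v * x
              + (x * (v * (x * (1 - (g₀ : R)))) - x * ((1 - (g₀ : R)) * (v * x))) := by
              noncomm_ring
        _ = x * v - v * x := by rw [hswap2, sub_self, add_zero]
    have : ((u₀ : Rˣ) : R) * m = ((u₀ : Rˣ) : R) * d := by rw [hu₀m, hu₀d]
    exact (Units.mul_right_inj u₀).mp this
  -- main claim: for every h in the fiber, (1 - g₀⁻¹ * h) annihilates d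
  have hmain : ∀ h : ↥(f ⁻¹' {q}),
      (1 - ((g₀⁻¹ * h.1.1 : Rˣ) : R)) * d = 0 := by
    intro h
    set g : Rˣ := h.1.1 with hgdef
    have hgA : g ∈ A := h.1.2
    have hgx : (g : R) * x = x * (g : R) := hAx g hgA
    have hgv : (g : R) * v = v * (g : R) := hAv g hgA
    have huval : ((U g : Rˣ) : R) = 1 + x * (1 - (g : R)) := hUval g hgA
    have hfh : f h.1 = q := Set.mem_singleton_iff.mp h.2
    have hfh₀ : f h₀.1 = q := Set.mem_singleton_iff.mp h₀.2
    have hcos : ((U g)⁻¹)⁻¹ * (u₀)⁻¹ ∈ unitCentralizer v :=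
      QuotientGroup.eq.mp (hfh.trans hfh₀.symm)
    rw [inv_inv] at hcos
    have hwv : (((U g) * u₀⁻¹ : Rˣ) : R) * v = v * (((U g) * u₀⁻¹ : Rˣ) : R) :=
      mem_unitCentralizer.mp hcos
    rw [Units.val_mul] at hwv
    -- hwv : (↑(U g) * w) * v = v * (↑(U g) * w)
    have hwv' : (((U g) : Rˣ) : R) * w * v = v * ((((U g) : Rˣ) : R) * w) := hwv
    have hE : (((U g) : Rˣ) : R) * z = v * (((U g) : Rˣ) : R) := by
      rw [hzdef]
      calc (((U g) : Rˣ) : R) * (w * v * ((u₀ : Rˣ) : R))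
          = ((((U g) : Rˣ) : R) * w * v) * ((u₀ : Rˣ) : R) := by noncomm_ring
        _ = (v * ((((U g) : Rˣ) : R) * w)) * ((u₀ : Rˣ) : R) := by rw [hwv']
        _ = (v * (((U g) : Rˣ) : R)) * (w * ((u₀ : Rˣ) : R)) := by noncomm_ring
        _ = v * (((U g) : Rˣ) : R) := by rw [hwu, mul_one]
    have hE₀ : ((u₀ : Rˣ) : R) * z = v * ((u₀ : Rˣ) : R) := by
      rw [hzdef]
      calc ((u₀ : Rˣ) : R) * (w * v * ((u₀ : Rˣ) : R))
          = (((u₀ : Rˣ) : R) * w) * (v * ((u₀ : Rˣ) : R)) := by noncomm_ring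
        _ = v * ((u₀ : Rˣ) : R) := by rw [huw, one_mul]
    -- subtract:
    have hdiff : (x * ((g₀ : R) - (g : R))) * z = v * (x * ((g₀ : R) - (g : R))) := by
      have hsub : ((((U g) : Rˣ) : R) - ((u₀ : Rˣ) : R)) * z
          = v * ((((U g) : Rˣ) : R) - ((u₀ : Rˣ) : R)) := by
        rw [sub_mul, mul_sub, hE, hE₀]
      have hval : (((U g) : Rˣ) : R) - ((u₀ : Rˣ) : R) = x * ((g₀ : R) - (g : R)) := by
        rw [huval, hu₀val]; noncomm_ring
      rw [← hval]
      exact hsub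
    have hcomm_sub_x : x * ((g₀ : R) - (g : R)) = ((g₀ : R) - (g : R)) * x := by
      rw [mul_sub, sub_mul, hgx0, hgx]
    have hcomm_sub_vx : v * (((g₀ : R) - (g : R)) * x)
        = ((g₀ : R) - (g : R)) * (v * x) := by
      have hv_sub : v * ((g₀ : R) - (g : R)) = ((g₀ : R) - (g : R)) * v := by
        rw [mul_sub, sub_mul, hgv0, hgv]
      rw [← mul_assoc, hv_sub, mul_assoc]
    have hkey : ((g₀ : R) - (g : R)) * m = 0 := by
      rw [hmdef, mul_sub, sub_eq_zero]
      calc ((g₀ : R) - (g : R)) * (x * z)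
          = (((g₀ : R) - (g : R)) * x) * z := by rw [mul_assoc]
        _ = (x * ((g₀ : R) - (g : R))) * z := by rw [hcomm_sub_x]
        _ = v * (x * ((g₀ : R) - (g : R))) := hdiff
        _ = v * (((g₀ : R) - (g : R)) * x) := by rw [hcomm_sub_x]
        _ = ((g₀ : R) - (g : R)) * (v * x) := hcomm_sub_vx
    have hgm : (g₀ : R) * m = (g : R) * m := by
      rw [sub_mul] at hkey
      exact sub_eq_zero.mp hkey
    rw [← hm_eq_d, sub_mul, one_mul, sub_eq_zero, Units.val_mul, mul_assoc,
      ← hgm, ← mul_assoc]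
    rw [show ((g₀⁻¹ : Rˣ) : R) * (g₀ : R) = 1 from g₀.inv_mul, one_mul]
  -- conclude: infinitely many annihilators, contradicting ω
  have hinj : Function.Injective
      (fun h : ↥(f ⁻¹' {q}) => g₀⁻¹ * h.1.1) := by
    intro a b hab
    have : (a.1.1 : Rˣ) = b.1.1 := mul_left_cancel hab
    exact Subtype.ext (Subtype.ext this)
  have hinf : {h : Rˣ | h ∈ H ∧ (1 - (h : R)) * (x * y - y * x) = 0}.Infinite := by
    refine Set.infinite_of_injective_forall_mem hinj ?_
    intro a
    refine ⟨H.mul_mem (H.inv_mem h₀.1.2.1) a.1.2.1, ?_⟩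
    rw [← hddef]
    exact hmain a
  exact hinf (hH.2 x y hdne)
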